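/- Let 1 ≤ p < q, S > 0, and let u, w : [0,S] → E be paths of finite p-variation into a normed space with u_0 = w_0. Then ‖u − w‖_{q-var,[0,S]} ≤ (2 ‖u − w‖_{∞,[0,S]})^{(q−p)/q} · (‖u‖_{p-var,[0,S]} + ‖w‖_{p-var,[0,S]})^{p/q}. -/

import Mathlib

open Set

noncomputable section

/-- A finite partition of the interval `[a, b]`, given by points
`a = t 0 ≤ t 1 ≤ ⋯ ≤ t n = b`. -/
structure PVarPartition (a b : ℝ) where
  n : ℕ
  t : ℕ → ℝ
  npos : 0 < n
  first : t 0 = a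
  last : t n = b
  mono : ∀ i, i < n → t i ≤ t (i + 1)

variable {E : Type*} [NormedAddCommGroup E]

/-- `∑_i ‖y_{t_{i+1}} - y_{t_i}‖^p` along a partition. -/
def pvarSum (p : ℝ) {a b : ℝ} (y : ℝ → E) (P : PVarPartition a b) : ℝ :=
  ∑ i ∈ Finset.range P.n, ‖y (P.t (i + 1)) - y (P.t i)‖ ^ p

/-- The set of all `p`-variation sums of `y` over partitions of `[a,b]`. -/
def pvarSums (p a b : ℝ) (y : ℝ → E) : Set ℝ :=
  {r | ∃ P : PVarPartition a b, r = pvarSum p y P}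

/-- `y` has finite `p`-variation on `[a,b]`. -/
def FinitePVar (p a b : ℝ) (y : ℝ → E) : Prop :=
  BddAbove (pvarSums p a b y)

/-- The `p`-variation seminorm of `y` on `[a,b]`. -/
def pVar (p a b : ℝ) (y : ℝ → E) : ℝ :=
  sSup (pvarSums p a b y) ^ (1 / p)

/-- The uniform norm of `y` on `[a,b]`. -/
def unifNorm (a b : ℝ) (y : ℝ → E) : ℝ :=
  sSup ((fun t => ‖y t‖) '' Icc a b)

end

section Aux

variable {E : Type*} [NormedAddCommGroup E]

lemma partition_mono' {a b : ℝ} (P : PVarPartition a b) {j k : ℕ} (hjk : j ≤ k) (hk : k ≤ P.n) :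
    P.t j ≤ P.t k := by
  induction k, hjk using Nat.le_induction with
  | base => exact le_rfl
  | succ k h ih => exact le_trans (ih (by omega)) (P.mono k (by omega))

lemma partition_mem {a b : ℝ} (P : PVarPartition a b) {i : ℕ} (hi : i ≤ P.n) :
    P.t i ∈ Set.Icc a b := by
  constructor
  · have h := partition_mono' P (Nat.zero_le i) hi
    rwa [P.first] at h
  · have h := partition_mono' P hi le_rfl
    rwa [P.last] at h

lemma pvarSum_nonneg {p a b : ℝ} (y : ℝ → E) (P : PVarPartition a b) :
    0 ≤ pvarSum p y P :=
  Finset.sum_nonneg fun _ _ => Real.rpow_nonneg (norm_nonneg _) p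

/-- The trivial partition `{a, b}`. -/
def trivPartition {a b : ℝ} (hab : a ≤ b) : PVarPartition a b where
  n := 1
  t := fun i => if i = 0 then a else b
  npos := one_pos
  first := rfl
  last := rfl
  mono := by intro i hi; interval_cases i; simpa using hab

lemma sSup_pvarSums_nonneg {p a b : ℝ} (hab : a ≤ b) (y : ℝ → E) (h : FinitePVar p a b y) :
    0 ≤ sSup (pvarSums p a b y) :=
  le_trans (pvarSum_nonneg y (trivPartition hab)) (le_csSup h ⟨trivPartition hab, rfl⟩)

lemma pVar_nonneg' {p a b : ℝ} (hab : a ≤ b) (y : ℝ → E) (h : FinitePVar p a b y) :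
    0 ≤ pVar p a b y :=
  Real.rpow_nonneg (sSup_pvarSums_nonneg hab y h) _

lemma pvarSum_le_pVar_rpow {p a b : ℝ} (hp : 0 < p) (y : ℝ → E) (h : FinitePVar p a b y)
    (P : PVarPartition a b) :
    (pvarSum p y P) ^ (1 / p) ≤ pVar p a b y :=
  Real.rpow_le_rpow (pvarSum_nonneg y P) (le_csSup h ⟨P, rfl⟩) (by positivity)

/-- Key estimate: any `p`-variation sum of `u - w` is at most
`(pVar u + pVar w) ^ p`. -/
lemma key_sub_bound {p S : ℝ} (hp : 1 ≤ p) (u w : ℝ → E)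
    (hu : FinitePVar p 0 S u) (hw : FinitePVar p 0 S w) (P : PVarPartition 0 S) :
    pvarSum p (fun t => u t - w t) P ≤ (pVar p 0 S u + pVar p 0 S w) ^ p := by
  have hp0 : 0 < p := lt_of_lt_of_le one_pos hp
  set f : ℕ → ℝ := fun i => ‖u (P.t (i + 1)) - u (P.t i)‖ with hf
  set g : ℕ → ℝ := fun i => ‖w (P.t (i + 1)) - w (P.t i)‖ with hg
  have step1 : pvarSum p (fun t => u t - w t) P ≤ ∑ i ∈ Finset.range P.n, (f i + g i) ^ p := by
    apply Finset.sum_le_sum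
    intro i _
    apply Real.rpow_le_rpow (norm_nonneg _) _ hp0.le
    have h2 : (u (P.t (i + 1)) - w (P.t (i + 1))) - (u (P.t i) - w (P.t i))
        = (u (P.t (i + 1)) - u (P.t i)) - (w (P.t (i + 1)) - w (P.t i)) := by abel
    rw [h2]
    exact norm_sub_le _ _
  have mink := Real.Lp_add_le_of_nonneg (s := Finset.range P.n) (f := f) (g := g) hp
    (fun i _ => norm_nonneg _) (fun i _ => norm_nonneg _)
  have hsum_nonneg : (0:ℝ) ≤ ∑ i ∈ Finset.range P.n, (f i + g i) ^ p :=
    Finset.sum_nonneg fun i _ => Real.rpow_nonneg (by positivity) _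
  have hfu : (∑ i ∈ Finset.range P.n, f i ^ p) ^ (1 / p) ≤ pVar p 0 S u :=
    pvarSum_le_pVar_rpow hp0 u hu P
  have hgw : (∑ i ∈ Finset.range P.n, g i ^ p) ^ (1 / p) ≤ pVar p 0 S w :=
    pvarSum_le_pVar_rpow hp0 w hw P
  have step2 : (∑ i ∈ Finset.range P.n, (f i + g i) ^ p) ^ (1 / p)
      ≤ pVar p 0 S u + pVar p 0 S w := le_trans mink (add_le_add hfu hgw)
  calc pvarSum p (fun t => u t - w t) P
      ≤ ∑ i ∈ Finset.range P.n, (f i + g i) ^ p := step1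
    _ = ((∑ i ∈ Finset.range P.n, (f i + g i) ^ p) ^ (1 / p)) ^ p := by
        rw [← Real.rpow_mul hsum_nonneg, one_div, inv_mul_cancel₀ hp0.ne', Real.rpow_one]
    _ ≤ (pVar p 0 S u + pVar p 0 S w) ^ p :=
        Real.rpow_le_rpow (Real.rpow_nonneg hsum_nonneg _) step2 hp0.le

end Aux

/-- **Interpolation estimate for `p`-variation norms.**
If `1 ≤ p < q` and `u, w` are paths of finite `p`-variation on `[0,S]` with `u_0 = w_0`,
then `‖u-w‖_{q-var} ≤ (2‖u-w‖_∞)^{(q-p)/q} (‖u‖_{p-var} + ‖w‖_{p-var})^{p/q}`. -/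
theorem pvariation_interpolation
    {E : Type*} [NormedAddCommGroup E]
    (p q S : ℝ) (hp : 1 ≤ p) (hpq : p < q) (hS : 0 < S)
    (u w : ℝ → E)
    (hu : FinitePVar p 0 S u) (hw : FinitePVar p 0 S w)
    (h0 : u 0 = w 0) :
    pVar q 0 S (fun t => u t - w t)
      ≤ (2 * unifNorm 0 S (fun t => u t - w t)) ^ ((q - p) / q)
        * (pVar p 0 S u + pVar p 0 S w) ^ (p / q) := by
  have hp0 : 0 < p := lt_of_lt_of_le one_pos hp
  have hq0 : 0 < q := hp0.trans hpq
  set y : ℝ → E := fun t => u t - w t with hy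
  set V : ℝ := pVar p 0 S u + pVar p 0 S w with hVdef
  have hV0 : 0 ≤ V :=
    add_nonneg (pVar_nonneg' hS.le u hu) (pVar_nonneg' hS.le w hw)
  have hA : ∀ P : PVarPartition 0 S, pvarSum p y P ≤ V ^ p := key_sub_bound hp u w hu hw
  have hy0 : y 0 = 0 := by simp [hy, h0]
  -- pointwise bound `‖y t‖ ≤ V`
  have hyb : ∀ t ∈ Icc (0:ℝ) S, ‖y t‖ ≤ V := by
    intro t ht
    set P2 : PVarPartition 0 S :=
      ⟨2, fun i => if i = 0 then 0 else if i = 1 then t else S, two_pos, rfl, rfl, by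
        intro i hi; interval_cases i <;> simp [ht.1, ht.2]⟩ with hP2
    have hsum : pvarSum p y P2 = ‖y t - y 0‖ ^ p + ‖y S - y t‖ ^ p := by
      simp [pvarSum, hP2, Finset.sum_range_succ]
    have h1 : ‖y t‖ ^ p ≤ pvarSum p y P2 := by
      rw [hsum, hy0, sub_zero]
      have : (0:ℝ) ≤ ‖y S - y t‖ ^ p := Real.rpow_nonneg (norm_nonneg _) p
      linarith
    have h2 : ‖y t‖ ^ p ≤ V ^ p := le_trans h1 (hA P2)
    by_contra hcon
    push_neg at hcon
    exact absurd h2 (not_le.mpr (Real.rpow_lt_rpow hV0 hcon hp0))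
  have hb : BddAbove ((fun t => ‖y t‖) '' Icc (0:ℝ) S) := by
    refine ⟨V, ?_⟩
    rintro _ ⟨t, ht, rfl⟩
    exact hyb t ht
  set N : ℝ := unifNorm 0 S y with hNdef
  have hN : ∀ t ∈ Icc (0:ℝ) S, ‖y t‖ ≤ N := fun t ht => le_csSup hb ⟨t, ht, rfl⟩
  have hN0 : 0 ≤ N := le_trans (norm_nonneg (y 0)) (hN 0 ⟨le_rfl, hS.le⟩)
  have h2N : (0:ℝ) ≤ 2 * N := by linarith
  set B : ℝ := (2 * N) ^ (q - p) * V ^ p with hBdef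
  have hmain : ∀ P : PVarPartition 0 S, pvarSum q y P ≤ B := by
    intro P
    have h1 : pvarSum q y P ≤ (2 * N) ^ (q - p) * pvarSum p y P := by
      rw [pvarSum, pvarSum, Finset.mul_sum]
      apply Finset.sum_le_sum
      intro i hi
      have hi' : i < P.n := Finset.mem_range.mp hi
      have hd : ‖y (P.t (i + 1)) - y (P.t i)‖ ≤ 2 * N := by
        calc ‖y (P.t (i + 1)) - y (P.t i)‖
            ≤ ‖y (P.t (i + 1))‖ + ‖y (P.t i)‖ := norm_sub_le _ _
          _ ≤ N + N := add_le_add (hN _ (partition_mem P (by omega)))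
              (hN _ (partition_mem P hi'.le))
          _ = 2 * N := by ring
      calc ‖y (P.t (i + 1)) - y (P.t i)‖ ^ q
          = ‖y (P.t (i + 1)) - y (P.t i)‖ ^ (q - p + p) := by rw [sub_add_cancel]
        _ = ‖y (P.t (i + 1)) - y (P.t i)‖ ^ (q - p)
            * ‖y (P.t (i + 1)) - y (P.t i)‖ ^ p :=
            Real.rpow_add' (norm_nonneg _) (by rw [sub_add_cancel]; exact hq0.ne')
        _ ≤ (2 * N) ^ (q - p) * ‖y (P.t (i + 1)) - y (P.t i)‖ ^ p :=
            mul_le_mul_of_nonneg_right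
              (Real.rpow_le_rpow (norm_nonneg _) hd (by linarith))
              (Real.rpow_nonneg (norm_nonneg _) p)
    calc pvarSum q y P ≤ (2 * N) ^ (q - p) * pvarSum p y P := h1
      _ ≤ B := mul_le_mul_of_nonneg_left (hA P) (Real.rpow_nonneg h2N _)
  have hne : (pvarSums q 0 S y).Nonempty := ⟨_, trivPartition hS.le, rfl⟩
  have hbdd : BddAbove (pvarSums q 0 S y) := by
    refine ⟨B, ?_⟩
    rintro _ ⟨P, rfl⟩
    exact hmain P
  have hle : sSup (pvarSums q 0 S y) ≤ B := by
    apply csSup_le hne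
    rintro _ ⟨P, rfl⟩
    exact hmain P
  have hsup0 : 0 ≤ sSup (pvarSums q 0 S y) := sSup_pvarSums_nonneg hS.le y hbdd
  have final : pVar q 0 S y ≤ B ^ (1 / q) :=
    Real.rpow_le_rpow hsup0 hle (by positivity)
  have hBeq : B ^ (1 / q) = (2 * N) ^ ((q - p) / q) * V ^ (p / q) := by
    rw [hBdef, Real.mul_rpow (Real.rpow_nonneg h2N _) (Real.rpow_nonneg hV0 _),
      ← Real.rpow_mul h2N, ← Real.rpow_mul hV0, mul_one_div, mul_one_div]
  rw [hBeq] at final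
  exact final
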